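/- arXiv:2205.04395 — 4 statements merged into one kernel-verified Lean document; each statement's English description precedes it below -/
import Mathlib

section
/- Let V be a finite-dimensional real inner product space, and let Φ : V → ℝ be continuous, with Φ convex and differentiable along each ray t ↦ t·b from the origin, Φ(0)=0, and such that λ(x,b,t) := (d/ds)|_{s=t} Φ(s·b) is jointly continuous in (b,t) and nondecreasing in t. If λ(b) := lim_{t→∞} λ(b,t) > 0 for every unit vector b ∈ V, then there exist constants C₁, C₂ > 0 such that ‖v‖ ≤ C₁·Φ(v) + C₂ for all v ∈ V. -/
open Set Filter Topology Metric

/-- Conversely, positivity of all maximal weights in unit directions implies linear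
properness of `Φ`. -/
theorem stmt2 {V : Type*} [NormedAddCommGroup V] [InnerProductSpace ℝ V]
    [FiniteDimensional ℝ V]
    (Φ : V → ℝ) (hΦcont : Continuous Φ) (h0 : Φ 0 = 0)
    (hconv : ∀ b : V, ‖b‖ = 1 → ConvexOn ℝ univ fun t : ℝ => Φ (t • b))
    (hdiff : ∀ b : V, ‖b‖ = 1 → Differentiable ℝ fun t : ℝ => Φ (t • b))
    (lamt : V → ℝ → ℝ)
    (hlamt : ∀ b : V, ‖b‖ = 1 → ∀ t : ℝ, lamt b t = deriv (fun s : ℝ => Φ (s • b)) t)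
    (hcont : Continuous fun p : V × ℝ => lamt p.1 p.2)
    (hmono : ∀ b : V, ‖b‖ = 1 → Monotone (lamt b))
    (lam : V → EReal)
    (hlam : ∀ b : V, ‖b‖ = 1 →
      Tendsto (fun t : ℝ => ((lamt b t : ℝ) : EReal)) atTop (𝓝 (lam b)))
    (hpos : ∀ b : V, ‖b‖ = 1 → 0 < lam b) :
    ∃ C₁ C₂ : ℝ, 0 < C₁ ∧ 0 < C₂ ∧ ∀ v : V, ‖v‖ ≤ C₁ * Φ v + C₂ := by
  by_cases hV : ∀ v : V, v = 0
  · refine ⟨1, 1, one_pos, one_pos, fun v => ?_⟩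
    rw [hV v]; simp [h0]
  push_neg at hV
  obtain ⟨v₀, hv₀⟩ := hV
  have hb₀ : ‖(‖v₀‖⁻¹ • v₀ : V)‖ = 1 := norm_smul_inv_norm hv₀
  have hsc : IsCompact (sphere (0:V) 1) := isCompact_sphere 0 1
  have hcontb : ∀ t : ℝ, Continuous fun b : V => lamt b t := fun t =>
    hcont.comp (continuous_id.prodMk continuous_const)
  have hcover : sphere (0:V) 1 ⊆ ⋃ t : ℝ, {b | 0 < lamt b t} := by
    intro b hb
    have hb1 : ‖b‖ = 1 := mem_sphere_zero_iff_norm.1 hb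
    have hev : ∀ᶠ t in atTop, (0 : EReal) < (lamt b t : ℝ) :=
      (hlam b hb1).eventually (lt_mem_nhds (hpos b hb1))
    obtain ⟨t, ht⟩ := hev.exists
    exact mem_iUnion.2 ⟨t, by exact_mod_cast ht⟩
  obtain ⟨s, hs⟩ := hsc.elim_finite_subcover (fun t : ℝ => {b | 0 < lamt b t})
    (fun t => isOpen_lt continuous_const (hcontb t)) hcover
  set T : ℝ := (insert (1:ℝ) s).max' ⟨1, Finset.mem_insert_self _ _⟩ with hTdef
  have hT1 : (1:ℝ) ≤ T := Finset.le_max' _ _ (Finset.mem_insert_self _ _)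
  have hTs : ∀ t ∈ s, t ≤ T := fun t ht => Finset.le_max' _ _ (Finset.mem_insert_of_mem ht)
  have hposT : ∀ b : V, ‖b‖ = 1 → 0 < lamt b T := by
    intro b hb1
    have hb : b ∈ ⋃ t ∈ s, {b : V | 0 < lamt b t} := hs (mem_sphere_zero_iff_norm.2 hb1)
    obtain ⟨t, hts, hbt⟩ := mem_iUnion₂.1 hb
    exact lt_of_lt_of_le hbt (hmono b hb1 (hTs t hts))
  have hne : (sphere (0:V) 1).Nonempty := ⟨_, mem_sphere_zero_iff_norm.2 hb₀⟩
  obtain ⟨bm, hbm, hbmin⟩ := hsc.exists_isMinOn hne (hcontb T).continuousOn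
  set ε : ℝ := lamt bm T with hεdef
  have hε : 0 < ε := hposT bm (mem_sphere_zero_iff_norm.1 hbm)
  have hεle : ∀ b : V, ‖b‖ = 1 → ε ≤ lamt b T := fun b hb => by
    simpa using hbmin (mem_sphere_zero_iff_norm.2 hb)
  -- minimum of Φ on the closed ball of radius T
  obtain ⟨m, hm, hmmin⟩ := (isCompact_closedBall (0:V) T).exists_isMinOn
    ⟨0, Metric.mem_closedBall_self (le_trans zero_le_one hT1)⟩ hΦcont.continuousOn
  set M : ℝ := Φ m with hMdef
  have hM0 : M ≤ 0 := by
    have := hmmin (Metric.mem_closedBall_self (x := (0:V)) (le_trans zero_le_one hT1))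
    simpa [h0] using this
  have hMle : ∀ v : V, ‖v‖ ≤ T → M ≤ Φ v := fun v hv => by
    simpa using hmmin (Metric.mem_closedBall.2 (by simpa using hv))
  -- key growth estimate along rays
  have key : ∀ b : V, ‖b‖ = 1 → ∀ t : ℝ, T ≤ t → Φ (T • b) + ε * (t - T) ≤ Φ (t • b) := by
    intro b hb t ht
    have hcS : Continuous fun s : ℝ => Φ (s • b) :=
      hΦcont.comp (continuous_id.smul continuous_const)
    have hder : ∀ x : ℝ, HasDerivAt (fun s : ℝ => Φ (s • b) - ε * s) (lamt b x - ε) x := by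
      intro x
      have h1 : HasDerivAt (fun s : ℝ => Φ (s • b)) (lamt b x) x := by
        rw [hlamt b hb x]; exact (hdiff b hb x).hasDerivAt
      have h2 : HasDerivAt (fun s : ℝ => ε * s) ε x := by
        simpa using (hasDerivAt_id x).const_mul ε
      exact h1.sub h2
    have hg : MonotoneOn (fun s : ℝ => Φ (s • b) - ε * s) (Ici T) := by
      apply monotoneOn_of_deriv_nonneg (convex_Ici T)
        (fun x _ => (hder x).continuousAt.continuousWithinAt)
        (fun x _ => (hder x).differentiableAt.differentiableWithinAt)
      intro x hx
      rw [interior_Ici] at hx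
      rw [(hder x).deriv]
      have : ε ≤ lamt b x := le_trans (hεle b hb) (hmono b hb (le_of_lt hx))
      linarith
    have := hg (self_mem_Ici) (mem_Ici.2 ht) ht
    simp only at this
    linarith
  refine ⟨1/ε, T - M/ε + 1, by positivity, ?_, ?_⟩
  · have : 0 ≤ -M/ε := div_nonneg (by linarith) (le_of_lt hε)
    have h2 : -M/ε = -(M/ε) := by ring
    linarith
  · intro v
    by_cases hvT : ‖v‖ ≤ T
    · have h1 : M ≤ Φ v := hMle v hvT
      have h2 : M/ε ≤ Φ v / ε := by gcongr
      have : 1/ε * Φ v = Φ v / ε := by ring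
      linarith
    · push_neg at hvT
      have hv0 : v ≠ 0 := by
        intro h; rw [h, norm_zero] at hvT; linarith
      set b : V := ‖v‖⁻¹ • v with hbdef
      have hb1 : ‖b‖ = 1 := norm_smul_inv_norm hv0
      have hvb : (‖v‖ : ℝ) • b = v := by
        rw [hbdef, smul_smul, mul_inv_cancel₀ (norm_ne_zero_iff.2 hv0), one_smul]
      have hkey := key b hb1 ‖v‖ (le_of_lt hvT)
      rw [hvb] at hkey
      have hTb : M ≤ Φ (T • b) := by
        apply hMle
        rw [norm_smul, hb1, mul_one, Real.norm_eq_abs, abs_of_nonneg (by linarith)]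
      -- ε * ‖v‖ ≤ Φ v - M + ε * T
      have h3 : ε * ‖v‖ ≤ Φ v - M + ε * T := by nlinarith
      have h4 : ‖v‖ ≤ (Φ v - M + ε * T) / ε := by
        rw [le_div_iff₀ hε]; linarith [mul_comm ε ‖v‖]
      have h5 : (Φ v - M + ε * T) / ε = 1/ε * Φ v - M/ε + T := by
        field_simp
      linarith
end

section
/- Let A and B be commuting symmetric endomorphisms of a finite-dimensional real inner product space. Then there exists δ > 0 such that for all ε ∈ (0, δ), ker(A + ε·B) = ker A ∩ ker B. -/
open Set

open Module.End in
/-- For commuting symmetric endomorphisms `A`, `B` of a finite-dimensional real inner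
product space, `ker (A + ε B) = ker A ⊓ ker B` for all sufficiently small `ε > 0`. -/
theorem stmt4 {V : Type*} [NormedAddCommGroup V] [InnerProductSpace ℝ V]
    [FiniteDimensional ℝ V]
    (A B : V →ₗ[ℝ] V) (hA : A.IsSymmetric) (hB : B.IsSymmetric)
    (hcomm : A ∘ₗ B = B ∘ₗ A) :
    ∃ δ > (0 : ℝ), ∀ ε ∈ Ioo (0 : ℝ) δ,
      LinearMap.ker (A + ε • B) = LinearMap.ker A ⊓ LinearMap.ker B := by
  classical
  -- The finite set of "bad" positive ratios of eigenvalues.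
  have hS : ({x : ℝ | ∃ α β : ℝ, Module.End.HasEigenvalue A α ∧ Module.End.HasEigenvalue B β ∧
      x = -α / β ∧ 0 < x}).Finite := by
    apply Set.Finite.subset (Set.Finite.image (fun p : ℝ × ℝ => -p.1 / p.2)
      ((Module.End.finite_hasEigenvalue A).prod (Module.End.finite_hasEigenvalue B)))
    rintro x ⟨α, β, hα, hβ, rfl, -⟩
    exact ⟨(α, β), ⟨hα, hβ⟩, rfl⟩
  set F : Finset ℝ := hS.toFinset with hF
  set δ : ℝ := if h : F.Nonempty then F.min' h else 1 with hδ
  have hδpos : 0 < δ := by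
    rw [hδ]
    split_ifs with h
    · obtain ⟨α, β, -, -, -, hx⟩ := (Set.Finite.mem_toFinset hS).mp (F.min'_mem h)
      exact hx
    · norm_num
  -- key property of δ
  have hkey : ∀ ε : ℝ, 0 < ε → ε < δ → ∀ α β : ℝ, Module.End.HasEigenvalue A α →
      Module.End.HasEigenvalue B β → α + ε * β = 0 → α = 0 ∧ β = 0 := by
    intro ε hε hεδ α β hα hβ heq
    by_cases hβ0 : β = 0
    · constructor
      · simpa [hβ0] using heq
      · exact hβ0
    · exfalso
      have hεval : ε = -α / β := by
        field_simp
        linarith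
      have hmem : ε ∈ F :=
        (Set.Finite.mem_toFinset hS).mpr ⟨α, β, hα, hβ, hεval, hε⟩
      have : δ ≤ ε := by
        rw [hδ]
        split_ifs with h
        · exact F.min'_le _ hmem
        · exact absurd ⟨ε, hmem⟩ h
      linarith
  refine ⟨δ, hδpos, ?_⟩
  rintro ε ⟨hε0, hεδ⟩
  set T : V →ₗ[ℝ] V := A + ε • B with hT
  have hTapply : ∀ x, T x = A x + ε • B x := fun x => rfl
  have hTsymm : T.IsSymmetric := by
    intro x y
    simp only [hTapply, inner_add_left, inner_add_right, real_inner_smul_left,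
      real_inner_smul_right, hA x y, hB x y]
  have hAB : Commute A B := by
    unfold Commute SemiconjBy
    rw [Module.End.mul_eq_comp, Module.End.mul_eq_comp, hcomm]
  set P : ℝ × ℝ → Submodule ℝ V :=
    fun i => eigenspace A i.2 ⊓ eigenspace B i.1 with hP
  have hTop : (⨆ i, P i) = ⊤ := by
    rw [iSup_prod, iSup_comm]
    exact LinearMap.IsSymmetric.iSup_iSup_eigenspace_inf_eigenspace_eq_top_of_commute hA hB hAB
  -- P (0,0) is the common kernel
  have hK : P ((0 : ℝ), (0 : ℝ)) = LinearMap.ker A ⊓ LinearMap.ker B := by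
    simp [hP, Module.End.eigenspace_zero]
  -- easy inclusion
  have hKker : LinearMap.ker A ⊓ LinearMap.ker B ≤ LinearMap.ker T := by
    intro x hx
    rw [Submodule.mem_inf] at hx
    rw [LinearMap.mem_ker, hTapply, LinearMap.mem_ker.mp hx.1, LinearMap.mem_ker.mp hx.2,
      smul_zero, add_zero]
  -- joint eigenspaces other than (0,0) are orthogonal to ker T
  have horth : ∀ i : ℝ × ℝ, i ≠ ((0 : ℝ), (0 : ℝ)) → (LinearMap.ker T) ⟂ P i := by
    intro i hi
    by_cases hbot : P i = ⊥
    · rw [hbot]; exact Submodule.isOrtho_bot_right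
    · -- eigenvalues exist
      obtain ⟨x, hx, hx0⟩ := Submodule.exists_mem_ne_zero_of_ne_bot hbot
      obtain ⟨hx1, hx2⟩ := hx
      have hαe : Module.End.HasEigenvalue A i.2 :=
        Module.End.hasEigenvalue_of_hasEigenvector ⟨hx1, hx0⟩
      have hβe : Module.End.HasEigenvalue B i.1 :=
        Module.End.hasEigenvalue_of_hasEigenvector ⟨hx2, hx0⟩
      set c : ℝ := i.2 + ε * i.1 with hc
      have hc0 : c ≠ 0 := by
        intro h
        obtain ⟨h1, h2⟩ := hkey ε hε0 hεδ i.2 i.1 hαe hβe h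
        exact hi (Prod.ext h2 h1)
      -- every element of P i is an eigenvector of T with eigenvalue c
      have hTy : ∀ y ∈ P i, T y = c • y := by
        rintro y ⟨hy1, hy2⟩
        have h1 : A y = i.2 • y := Module.End.mem_eigenspace_iff.mp hy1
        have h2 : B y = i.1 • y := Module.End.mem_eigenspace_iff.mp hy2
        rw [hTapply, h1, h2, hc, add_smul, smul_smul]
      intro z hz
      rw [Submodule.mem_orthogonal]
      intro y hy
      have hzker : T z = 0 := LinearMap.mem_ker.mp hz
      have : c * inner ℝ y z = 0 := by
        calc c * inner ℝ y z = inner ℝ (c • y) z := by rw [real_inner_smul_left]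
          _ = inner ℝ (T y) z := by rw [hTy y hy]
          _ = inner ℝ y (T z) := hTsymm y z
          _ = 0 := by rw [hzker, inner_zero_right]
      have := mul_eq_zero.mp this
      tauto
  set L : Submodule ℝ V := ⨆ (i : ℝ × ℝ) (_ : i ≠ ((0 : ℝ), (0 : ℝ))), P i with hL
  have hkerL : LinearMap.ker T ≤ Lᗮ := by
    rw [hL]
    exact Submodule.isOrtho_iSup_right.mpr fun i =>
      Submodule.isOrtho_iSup_right.mpr fun hi => horth i hi
  have hsup : P ((0 : ℝ), (0 : ℝ)) ⊔ L = ⊤ := by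
    rw [hL, ← iSup_split_single P ((0 : ℝ), (0 : ℝ))]
    exact hTop
  have hKLperp : P ((0 : ℝ), (0 : ℝ)) ≤ Lᗮ := by
    rw [hK]
    exact le_trans hKker hkerL
  have hLperp : Lᗮ = P ((0 : ℝ), (0 : ℝ)) := by
    have := sup_inf_assoc_of_le (x := P ((0 : ℝ), (0 : ℝ))) (y := L) (z := Lᗮ) hKLperp
    rw [hsup, top_inf_eq, (Submodule.orthogonal_disjoint L).eq_bot, sup_bot_eq] at this
    exact this
  apply le_antisymm
  · rw [← hK, ← hLperp]
    exact hkerL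
  · exact hKker
end

section
/- Let A, B be commuting symmetric endomorphisms of a finite-dimensional real inner product space V, and let v ∈ V. Suppose the limits y := lim_{t→∞} exp(tA)·v and z := lim_{t→∞} exp(tB)·y exist. Then there exists δ > 0 such that for all ε ∈ (0, δ), lim_{t→∞} exp(t(A + εB))·v = z. -/
open Set Filter Topology Nat

section Aux

variable {V : Type*} [NormedAddCommGroup V] [InnerProductSpace ℝ V] [FiniteDimensional ℝ V]

lemma aux_exp_apply_eig (T : V →L[ℝ] V) {x : V} {μ : ℝ} (h : T x = μ • x) :
    NormedSpace.exp T x = Real.exp μ • x := by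
  have hpow : ∀ n : ℕ, (T ^ n) x = μ ^ n • x := by
    intro n
    induction n with
    | zero => simp
    | succ n ih =>
      have h1 : (T ^ (n + 1)) x = (T ^ n) (T x) := by rw [pow_succ]; rfl
      rw [h1, h, map_smul, ih, smul_smul, mul_comm, ← pow_succ]
  have hs : Summable fun n : ℕ => (n !⁻¹ : ℝ) • T ^ n := NormedSpace.expSeries_summable' T
  have h1 : NormedSpace.exp T x = ∑' n : ℕ, ((n !⁻¹ : ℝ) • T ^ n) x := by
    rw [NormedSpace.exp_eq_tsum ℝ]
    exact (ContinuousLinearMap.apply ℝ V x).map_tsum hs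
  rw [h1]
  have h2 : ∀ n : ℕ, ((n !⁻¹ : ℝ) • T ^ n) x = ((n !⁻¹ : ℝ) • μ ^ n) • x := by
    intro n
    rw [ContinuousLinearMap.smul_apply, hpow, smul_smul, smul_eq_mul]
  simp_rw [h2]
  rw [Summable.tsum_smul_const (NormedSpace.expSeries_summable' (𝕂 := ℝ) μ)]
  congr 1
  rw [Real.exp_eq_exp_ℝ, NormedSpace.exp_eq_tsum ℝ]

lemma aux_norm_exp_le (T : V →L[ℝ] V) : ‖NormedSpace.exp T‖ ≤ Real.exp ‖T‖ := by
  rw [NormedSpace.exp_eq_tsum ℝ]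
  refine (norm_tsum_le_tsum_norm (NormedSpace.norm_expSeries_summable' (𝕂 := ℝ) T)).trans ?_
  rw [Real.exp_eq_exp_ℝ, NormedSpace.exp_eq_tsum_div]
  refine Summable.tsum_le_tsum (fun n => ?_) (NormedSpace.norm_expSeries_summable' (𝕂 := ℝ) T)
    (Real.summable_pow_div_factorial ‖T‖)
  rw [norm_smul, norm_inv, Real.norm_natCast, div_eq_inv_mul]
  gcongr
  rcases Nat.eq_zero_or_pos n with hn | hn
  · subst hn; rw [pow_zero, pow_zero]; exact ContinuousLinearMap.norm_id_le
  · exact norm_pow_le' T hn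


lemma aux_decay (A : V →L[ℝ] V) (hA : (A : V →ₗ[ℝ] V).IsSymmetric)
    (v y : V) (hy : Tendsto (fun t : ℝ => NormedSpace.exp (t • A) v) atTop (𝓝 y)) :
    ∃ c > (0 : ℝ), ∃ C : ℝ, ∀ t : ℝ, 0 ≤ t →
      ‖NormedSpace.exp (t • A) v - y‖ ≤ C * Real.exp (-c * t) := by
  set n := Module.finrank ℝ V with hnn
  have hn : Module.finrank ℝ V = n := rfl
  set b := hA.eigenvectorBasis hn with hbdef
  set μ := hA.eigenvalues hn with hμdef
  set c : Fin n → ℝ := fun i => (inner ℝ (b i) v : ℝ) with hcdef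
  set d : Fin n → ℝ := fun i => (inner ℝ (b i) y : ℝ) with hddef
  have hb : ∀ i, A (b i) = μ i • b i := fun i => hA.apply_eigenvectorBasis hn i
  have hexp : ∀ (t : ℝ) i, NormedSpace.exp (t • A) (b i) = Real.exp (t * μ i) • b i := by
    intro t i
    apply aux_exp_apply_eig
    rw [ContinuousLinearMap.smul_apply, hb, smul_smul]
  have hexpand : ∀ t : ℝ, NormedSpace.exp (t • A) v
      = ∑ i, (Real.exp (t * μ i) * c i) • b i := by
    intro t
    conv_lhs => rw [← b.sum_repr' v, map_sum]
    refine Finset.sum_congr rfl fun i _ => ?_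
    rw [map_smul, hexp, smul_smul, mul_comm]
  have hortho : ∀ i j : Fin n, (inner ℝ (b i) (b j) : ℝ) = if i = j then 1 else 0 :=
    fun i j => orthonormal_iff_ite.mp b.orthonormal i j
  have hcoord : ∀ i, Tendsto (fun t : ℝ => Real.exp (t * μ i) * c i) atTop (𝓝 (d i)) := by
    intro i
    have hcont : Continuous fun w : V => (inner ℝ (b i) w : ℝ) := Continuous.inner continuous_const continuous_id
    have h1 : Tendsto (fun t : ℝ => (inner ℝ (b i) (NormedSpace.exp (t • A) v) : ℝ)) atTop (𝓝 (d i)) :=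
      (hcont.tendsto y).comp hy
    refine h1.congr fun t => ?_
    rw [hexpand t, inner_sum]
    simp_rw [real_inner_smul_right, hortho]
    simp [mul_ite]
  -- the constant c₀
  set s : Finset ℝ := insert 1 (Finset.univ.image fun i => if μ i < 0 then -μ i else 1) with hsdef
  have hs_ne : s.Nonempty := ⟨1, Finset.mem_insert_self 1 _⟩
  set c₀ := s.min' hs_ne with hc₀def
  have hc₀pos : 0 < c₀ := by
    rw [hc₀def]
    apply (Finset.lt_min'_iff _ _).mpr
    intro a ha
    rcases Finset.mem_insert.mp ha with h | h
    · simp [h]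
    · obtain ⟨i, _, rfl⟩ := Finset.mem_image.mp h
      split_ifs with h' 
      · linarith
      · norm_num
  have hc₀le : ∀ i, μ i < 0 → c₀ ≤ -μ i := by
    intro i hi
    refine Finset.min'_le _ _ ?_
    refine Finset.mem_insert_of_mem (Finset.mem_image.mpr ⟨i, Finset.mem_univ i, ?_⟩)
    rw [if_pos hi]
  have hkey : ∀ i, ∀ t : ℝ, 0 ≤ t →
      |Real.exp (t * μ i) * c i - d i| ≤ |c i| * Real.exp (-c₀ * t) := by
    intro i
    rcases lt_trichotomy (μ i) 0 with hμi | hμi | hμi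
    · have hlim0 : Tendsto (fun t : ℝ => Real.exp (t * μ i) * c i) atTop (𝓝 (0 * c i)) :=
        (Real.tendsto_exp_atBot.comp (tendsto_id.atTop_mul_const_of_neg hμi)).mul_const _
      have hd : d i = 0 := by
        have := tendsto_nhds_unique (hcoord i) hlim0
        simpa using this
      intro t ht
      rw [hd, sub_zero, abs_mul, Real.abs_exp, mul_comm]
      have hle : c₀ ≤ -μ i := hc₀le i hμi
      have hexp_le : Real.exp (t * μ i) ≤ Real.exp (-c₀ * t) := by
        apply Real.exp_le_exp.mpr
        nlinarith [mul_nonneg ht (by linarith : (0:ℝ) ≤ -μ i - c₀)]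
      exact mul_le_mul_of_nonneg_left hexp_le (abs_nonneg _)
    · have hconst : (fun t : ℝ => Real.exp (t * μ i) * c i) = fun _ => c i := by
        funext t; rw [hμi, mul_zero, Real.exp_zero, one_mul]
      have hd : d i = c i := tendsto_nhds_unique (hcoord i) (hconst ▸ tendsto_const_nhds)
      intro t ht
      rw [hμi, mul_zero, Real.exp_zero, one_mul, hd, sub_self, abs_zero]
      positivity
    · have hc0 : c i = 0 := by
        by_contra hc
        have h1 : Tendsto (fun t : ℝ => |Real.exp (t * μ i) * c i|) atTop atTop := by
          have h2 : Tendsto (fun t : ℝ => Real.exp (t * μ i)) atTop atTop :=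
            Real.tendsto_exp_atTop.comp (tendsto_id.atTop_mul_const hμi)
          have h3 := h2.atTop_mul_const (abs_pos.mpr hc)
          refine h3.congr fun t => ?_
          rw [abs_mul, Real.abs_exp]
        exact not_tendsto_atTop_of_tendsto_nhds (hcoord i).abs h1
      have hd : d i = 0 := by
        have : Tendsto (fun t : ℝ => Real.exp (t * μ i) * c i) atTop (𝓝 0) := by
          simp [hc0]
        exact tendsto_nhds_unique (hcoord i) this
      intro t ht
      rw [hc0, hd, mul_zero, sub_zero, abs_zero]
      positivity
  refine ⟨c₀, hc₀pos, ∑ i, |c i|, fun t ht => ?_⟩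
  have hy' : y = ∑ i, d i • b i := by
    conv_lhs => rw [← b.sum_repr' y]
  rw [hexpand t, hy', ← Finset.sum_sub_distrib]
  refine (norm_sum_le _ _).trans ?_
  rw [Finset.sum_mul]
  refine Finset.sum_le_sum fun i _ => ?_
  rw [← sub_smul, norm_smul, Real.norm_eq_abs]
  have hbi : ‖b i‖ = 1 := b.orthonormal.1 i
  rw [hbi, mul_one]
  exact hkey i t ht


end Aux

set_option synthInstance.maxHeartbeats 1000000 in
/-- If `y = lim_{t→∞} exp(tA) v` and `z = lim_{t→∞} exp(tB) y` exist for commuting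
symmetric endomorphisms `A, B`, then `exp(t(A + εB)) v → z` for all small `ε > 0`. -/
theorem stmt5 {V : Type*} [NormedAddCommGroup V] [InnerProductSpace ℝ V]
    [FiniteDimensional ℝ V]
    (A B : V →L[ℝ] V)
    (hA : ∀ v w : V, inner ℝ (A v) w = (inner ℝ v (A w) : ℝ))
    (hB : ∀ v w : V, inner ℝ (B v) w = (inner ℝ v (B w) : ℝ))
    (hcomm : A * B = B * A)
    (v y z : V)
    (hy : Tendsto (fun t : ℝ => NormedSpace.exp (t • A) v) atTop (𝓝 y))
    (hz : Tendsto (fun t : ℝ => NormedSpace.exp (t • B) y) atTop (𝓝 z)) :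
    ∃ δ > (0 : ℝ), ∀ ε ∈ Ioo (0 : ℝ) δ,
      Tendsto (fun t : ℝ => NormedSpace.exp (t • (A + ε • B)) v) atTop (𝓝 z) := by
  have hA' : (A : V →ₗ[ℝ] V).IsSymmetric := fun u w => hA u w
  obtain ⟨c₀, hc₀, C, hC⟩ := aux_decay A hA' v y hy
  have hAB : Commute A B := hcomm
  refine ⟨c₀ / (‖B‖ + 1), by positivity, fun ε hε => ?_⟩
  obtain ⟨hε0, hεδ⟩ := hε
  have hsplit : ∀ t : ℝ, NormedSpace.exp (t • (A + ε • B)) v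
      = NormedSpace.exp ((ε * t) • B) (NormedSpace.exp (t • A) v) := by
    intro t
    have h1 : t • (A + ε • B) = (ε * t) • B + t • A := by
      rw [smul_add, smul_smul, mul_comm t ε]
      abel
    have hc : Commute ((ε * t) • B) (t • A) := (hAB.symm.smul_left _).smul_right _
    rw [h1, NormedSpace.exp_add_of_commute_of_mem_ball (𝕂 := ℝ) hc
      (by rw [NormedSpace.expSeries_radius_eq_top]; exact edist_lt_top _ _)
      (by rw [NormedSpace.expSeries_radius_eq_top]; exact edist_lt_top _ _)]
    rfl
  have heq : ∀ t : ℝ, NormedSpace.exp (t • (A + ε • B)) v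
      = NormedSpace.exp ((ε * t) • B) y
        + NormedSpace.exp ((ε * t) • B) (NormedSpace.exp (t • A) v - y) := by
    intro t
    rw [hsplit t, ← map_add]
    congr 1
    abel
  have h1 : Tendsto (fun t : ℝ => NormedSpace.exp ((ε * t) • B) y) atTop (𝓝 z) := by
    have hmul : Tendsto (fun t : ℝ => ε * t) atTop atTop :=
      Tendsto.const_mul_atTop hε0 tendsto_id
    exact hz.comp hmul
  have hk : ε * ‖B‖ - c₀ < 0 := by
    have h2 : ε * (‖B‖ + 1) < c₀ := by
      have := (lt_div_iff₀ (by positivity : (0:ℝ) < ‖B‖ + 1)).mp hεδ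
      linarith
    nlinarith [norm_nonneg B]
  have h2 : Tendsto (fun t : ℝ => NormedSpace.exp ((ε * t) • B)
      (NormedSpace.exp (t • A) v - y)) atTop (𝓝 0) := by
    apply squeeze_zero_norm' (a := fun t => C * Real.exp ((ε * ‖B‖ - c₀) * t))
    · filter_upwards [eventually_ge_atTop (0:ℝ)] with t ht
      calc ‖NormedSpace.exp ((ε * t) • B) (NormedSpace.exp (t • A) v - y)‖
          ≤ ‖NormedSpace.exp ((ε * t) • B)‖ * ‖NormedSpace.exp (t • A) v - y‖ :=
            ContinuousLinearMap.le_opNorm _ _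
        _ ≤ Real.exp ‖(ε * t) • B‖ * (C * Real.exp (-c₀ * t)) := by
            apply mul_le_mul (aux_norm_exp_le _) (hC t ht) (norm_nonneg _) (Real.exp_pos _).le
        _ = C * Real.exp ((ε * ‖B‖ - c₀) * t) := by
            have hns : ‖(ε * t) • B‖ = (ε * t) * ‖B‖ := by
              rw [norm_smul (ε * t) B, Real.norm_eq_abs,
                abs_of_nonneg (by positivity : (0:ℝ) ≤ ε * t)]
            rw [hns, mul_comm (Real.exp _) _, mul_assoc, ← Real.exp_add]
            congr 1
            ring
    · have h3 : Tendsto (fun t : ℝ => (ε * ‖B‖ - c₀) * t) atTop atBot := by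
        have h0 : Tendsto (fun x : ℝ => x) atTop atTop := tendsto_id
        exact (h0.atTop_mul_const_of_neg hk).congr fun t => mul_comm t _
      have h4 := (Real.tendsto_exp_atBot.comp h3).const_mul C
      simpa using h4
  have h5 := h1.add h2
  rw [add_zero] at h5
  exact h5.congr fun t => (heq t).symm
end

section
/- Let f : [0,∞) → ℝ be convex and differentiable with f(0) = 0 and f(t₀) known at some t₀ > 0. For a ≥ t₀, f(a) ≥ f(t₀) + (a − t₀)·f'(t₀). Consequently, if additionally f(a)/a < 1/n and ‖·‖-normalized data bₙ := βₙ/‖βₙ‖ with aₙ = ‖βₙ‖ → ∞ satisfy f_{bₙ}(aₙ)/aₙ < 1/n, where each f_b is convex differentiable with f_b(0)=0 and (b,t) ↦ f_b'(t) continuous, then any limit point b₀ of (bₙ) satisfies f'_{b₀}(t₀) ≤ 0 for every t₀ > 0. -/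
open Set Filter Topology

lemma key_grad_ineq (f : ℝ → ℝ) (hc : ConvexOn ℝ (Ici (0 : ℝ)) f)
    (hd : Differentiable ℝ f) (t₀ a : ℝ) (ht : 0 < t₀) (hta : t₀ ≤ a) :
    f t₀ + (a - t₀) * deriv f t₀ ≤ f a := by
  rcases eq_or_lt_of_le hta with rfl | h
  · simp
  · have hs := hc.deriv_le_slope (mem_Ici.2 ht.le) (mem_Ici.2 (ht.le.trans hta)) h (hd t₀)
    rw [slope_def_field] at hs
    have hpos : 0 < a - t₀ := by linarith
    have := (le_div_iff₀ hpos).1 hs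
    linarith

/-- Convexity estimate `f(a) ≥ f(t₀) + (a − t₀) f'(t₀)`, and its consequence: if
`f_{bₙ}(‖βₙ‖)/‖βₙ‖ < 1/n` with `‖βₙ‖ → ∞` and `bₙ = βₙ/‖βₙ‖ → b₀` along a subsequence,
then `f'_{b₀}(t₀) ≤ 0` for every `t₀ > 0`. -/
theorem stmt19 {V : Type*} [NormedAddCommGroup V] [InnerProductSpace ℝ V]
    [FiniteDimensional ℝ V]
    (fb : V → ℝ → ℝ)
    (hconv : ∀ b : V, ‖b‖ = 1 → ConvexOn ℝ (Ici (0 : ℝ)) (fb b))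
    (hdiff : ∀ b : V, ‖b‖ = 1 → Differentiable ℝ (fb b))
    (h0 : ∀ b : V, ‖b‖ = 1 → fb b 0 = 0)
    (hcont : Continuous fun p : V × ℝ => deriv (fb p.1) p.2)
    (β : ℕ → V) (hβ : ∀ n : ℕ, 1 ≤ n → β n ≠ 0)
    (hnorm : Tendsto (fun n => ‖β n‖) atTop atTop)
    (hsmall : ∀ n : ℕ, 1 ≤ n →
      fb (‖β n‖⁻¹ • β n) ‖β n‖ / ‖β n‖ < 1 / (n : ℝ))
    (b₀ : V) (ψ : ℕ → ℕ) (hψ : StrictMono ψ) (hψ1 : ∀ k, 1 ≤ ψ k)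
    (hlim : Tendsto (fun k => ‖β (ψ k)‖⁻¹ • β (ψ k)) atTop (𝓝 b₀)) :
    (∀ (f : ℝ → ℝ), ConvexOn ℝ (Ici (0 : ℝ)) f → Differentiable ℝ f → f 0 = 0 →
      ∀ t₀ a : ℝ, 0 < t₀ → t₀ ≤ a → f t₀ + (a - t₀) * deriv f t₀ ≤ f a) ∧
    ∀ t₀ : ℝ, 0 < t₀ → deriv (fb b₀) t₀ ≤ 0 := by
  refine ⟨fun f hc hd _ t₀ a ht hta => key_grad_ineq f hc hd t₀ a ht hta, ?_⟩
  intro t₀ ht₀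
  set bn : ℕ → V := fun k => ‖β (ψ k)‖⁻¹ • β (ψ k) with hbn
  set a : ℕ → ℝ := fun k => ‖β (ψ k)‖ with ha
  have hbnorm : ∀ k, ‖bn k‖ = 1 := by
    intro k
    have hne : β (ψ k) ≠ 0 := hβ _ (hψ1 k)
    have : ‖β (ψ k)‖ ≠ 0 := norm_ne_zero_iff.2 hne
    simp [hbn, norm_smul, abs_of_nonneg (inv_nonneg.2 (norm_nonneg _)),
      inv_mul_cancel₀ this]
  have haT : Tendsto a atTop atTop := hnorm.comp hψ.tendsto_atTop
  have haT' : Tendsto (fun k => a k - t₀) atTop atTop :=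
    tendsto_atTop_add_const_right _ (-t₀) haT
  have hinv : Tendsto (fun k => (a k - t₀)⁻¹) atTop (𝓝 0) :=
    tendsto_inv_atTop_zero.comp haT'
  have hψT : Tendsto (fun k => ((ψ k : ℝ))⁻¹) atTop (𝓝 0) :=
    tendsto_inv_atTop_zero.comp (tendsto_natCast_atTop_atTop.comp hψ.tendsto_atTop)
  -- limits of the derivative sequences
  have hg : Tendsto (fun k => deriv (fb (bn k)) t₀) atTop (𝓝 (deriv (fb b₀) t₀)) := by
    have : Tendsto (fun k => ((bn k, t₀) : V × ℝ)) atTop (𝓝 (b₀, t₀)) :=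
      hlim.prodMk_nhds tendsto_const_nhds
    exact (hcont.tendsto (b₀, t₀)).comp this
  have hd0 : Tendsto (fun k => deriv (fb (bn k)) 0) atTop (𝓝 (deriv (fb b₀) 0)) := by
    have : Tendsto (fun k => ((bn k, (0:ℝ)) : V × ℝ)) atTop (𝓝 (b₀, 0)) :=
      hlim.prodMk_nhds tendsto_const_nhds
    exact (hcont.tendsto (b₀, 0)).comp this
  -- a k / (a k - t₀) → 1
  have hfrac : Tendsto (fun k => a k * (a k - t₀)⁻¹) atTop (𝓝 1) := by
    have h1 : Tendsto (fun k => 1 + t₀ * (a k - t₀)⁻¹) atTop (𝓝 (1 + t₀ * 0)) :=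
      tendsto_const_nhds.add (tendsto_const_nhds.mul hinv)
    rw [mul_zero, add_zero] at h1
    refine h1.congr' ?_
    filter_upwards [haT'.eventually_gt_atTop 0] with k hk
    have hne : a k - t₀ ≠ 0 := ne_of_gt hk
    field_simp
    ring
  set R : ℕ → ℝ :=
    fun k => (a k * (a k - t₀)⁻¹) * ((ψ k : ℝ))⁻¹
      - (t₀ * deriv (fb (bn k)) 0) * (a k - t₀)⁻¹ with hR
  have hRlim : Tendsto R atTop (𝓝 0) := by
    have : Tendsto R atTop (𝓝 (1 * 0 - (t₀ * deriv (fb b₀) 0) * 0)) :=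
      (hfrac.mul hψT).sub ((tendsto_const_nhds.mul hd0).mul hinv)
    simpa using this
  have hle : ∀ᶠ k in atTop, deriv (fb (bn k)) t₀ ≤ R k := by
    filter_upwards [haT'.eventually_gt_atTop 0] with k hk
    have hb : ‖bn k‖ = 1 := hbnorm k
    have hapos : 0 < a k := by linarith
    have hnpos : (0 : ℝ) < (ψ k : ℝ) := by exact_mod_cast hψ1 k
    -- key inequality
    have h1 : fb (bn k) t₀ + (a k - t₀) * deriv (fb (bn k)) t₀ ≤ fb (bn k) (a k) :=
      key_grad_ineq _ (hconv _ hb) (hdiff _ hb) t₀ (a k) ht₀ (by linarith)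
    -- lower bound on fb (bn k) t₀
    have h2 : deriv (fb (bn k)) 0 ≤ slope (fb (bn k)) 0 t₀ :=
      (hconv _ hb).deriv_le_slope (mem_Ici.2 le_rfl) (mem_Ici.2 ht₀.le) ht₀
        ((hdiff _ hb) 0)
    rw [slope_def_field, h0 _ hb, sub_zero, sub_zero] at h2
    have h2' : t₀ * deriv (fb (bn k)) 0 ≤ fb (bn k) t₀ := by
      rw [le_div_iff₀ ht₀] at h2
      linarith [h2]
    -- upper bound at a k
    have h3 := hsmall (ψ k) (hψ1 k)
    rw [div_lt_div_iff₀ hapos hnpos] at h3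
    -- combine
    have h4 : (a k - t₀) * deriv (fb (bn k)) t₀ ≤ a k * ((ψ k : ℝ))⁻¹
        - t₀ * deriv (fb (bn k)) 0 := by
      have : a k * ((ψ k : ℝ))⁻¹ = fb (bn k) (a k) * (ψ k : ℝ) * ((ψ k : ℝ))⁻¹
          + (1 * a k - fb (bn k) (a k) * (ψ k : ℝ)) * ((ψ k : ℝ))⁻¹ := by ring
      have hfa : fb (bn k) (a k) ≤ a k * ((ψ k : ℝ))⁻¹ := by
        have h3' : fb (bn k) (a k) * (ψ k : ℝ) ≤ 1 * a k := h3.le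
        calc fb (bn k) (a k) = fb (bn k) (a k) * (ψ k : ℝ) * ((ψ k : ℝ))⁻¹ := by
              rw [mul_inv_cancel_right₀ (ne_of_gt hnpos)]
          _ ≤ (1 * a k) * ((ψ k : ℝ))⁻¹ :=
              mul_le_mul_of_nonneg_right h3' (inv_nonneg.2 hnpos.le)
          _ = a k * ((ψ k : ℝ))⁻¹ := by ring
      linarith
    have h5 : deriv (fb (bn k)) t₀
        ≤ (a k * ((ψ k : ℝ))⁻¹ - t₀ * deriv (fb (bn k)) 0) * (a k - t₀)⁻¹ := by
      have hkne : (a k - t₀) ≠ 0 := ne_of_gt hk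
      rw [← le_div_iff₀' hk] at h4
      rwa [div_eq_inv_mul, mul_comm] at h4
    calc deriv (fb (bn k)) t₀
        ≤ (a k * ((ψ k : ℝ))⁻¹ - t₀ * deriv (fb (bn k)) 0) * (a k - t₀)⁻¹ := h5
      _ = R k := by rw [hR]; ring
  exact le_of_tendsto_of_tendsto hg hRlim hle
end
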